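/- Let Ω be an invertible class on ℙ^n, let Q be a self-conjugate (0,1,p,Ω)-Euler data, let k₀ ≥ 1 and k★ ≥ 0 be heights, and let f ∈ q·F[[q]]. Then there exists a (0,1,p,Ω)-Euler data Q̃ linked to Q which agrees with Q at every height k ≠ k₀ and such that HG[𝓘(Q̃_{k₀})] = HG[𝓘(Q_{k₀})] + f · HG[𝓘(Q_{k★})] in A[[t,q]]. -/

import Mathlib

open Polynomial

set_option maxHeartbeats 1000000
set_option synthInstance.maxHeartbeats 400000

noncomputable section

/-- The ground field `F = ℂ(λ₀,…,λₙ)`, the field of rational functions in the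
equivariant weights `λ₀,…,λₙ`. -/
def F (n : ℕ) : Type := FractionRing (MvPolynomial (Fin (n+1)) ℂ)

instance (n : ℕ) : Field (F n) :=
  inferInstanceAs (Field (FractionRing (MvPolynomial (Fin (n+1)) ℂ)))

instance (n : ℕ) : Algebra (MvPolynomial (Fin (n+1)) ℂ) (F n) :=
  inferInstanceAs (Algebra (MvPolynomial (Fin (n+1)) ℂ)
    (FractionRing (MvPolynomial (Fin (n+1)) ℂ)))

/-- The weight `λᵢ` as an element of `F`. -/
def lam (n : ℕ) (i : Fin (n+1)) : F n :=
  algebraMap (MvPolynomial (Fin (n+1)) ℂ) (F n) (MvPolynomial.X i)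

/-- The polynomial ring `F[ℏ]`.  The variable `X` plays the role of `ℏ`. -/
abbrev Fh (n : ℕ) : Type := Polynomial (F n)

/-- The element `λᵢ + rℏ` of `F[ℏ]`. -/
def pt (n : ℕ) (i : Fin (n+1)) (r : ℕ) : Fh n := C (lam n i) + (r : Fh n) * X

/-- The generator `∏_{l=0}^{n} ∏_{m=0}^{d} (κ − λ_l − mℏ)` of the relation ideal
of the localized equivariant cohomology of `N_d`; the outer polynomial
variable `X` plays the role of `κ`. -/
def genN (n d : ℕ) : Polynomial (Fh n) :=
  ∏ l : Fin (n+1), ∏ m ∈ Finset.range (d+1), (X - C (pt n l m))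

/-- Classes on the linear model `N_d`:
`F[ℏ][κ] / (∏_{l=0}^{n} ∏_{m=0}^{d} (κ − λ_l − mℏ))`. -/
abbrev ClassN (n d : ℕ) : Type :=
  Polynomial (Fh n) ⧸ Ideal.span {genN n d}

lemma eval_genN (n d : ℕ) (i : Fin (n+1)) (r : ℕ) (hr : r ≤ d) :
    Polynomial.eval (pt n i r) (genN n d) = 0 := by
  rw [genN, Polynomial.eval_prod]
  refine Finset.prod_eq_zero (Finset.mem_univ i) ?_
  rw [Polynomial.eval_prod]
  refine Finset.prod_eq_zero (Finset.mem_range.mpr (Nat.lt_succ_of_le hr)) ?_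
  simp

/-- Restriction `Q(λᵢ + rℏ) ∈ F[ℏ]` of a class `Q` on `N_d` (for `r ≤ d`):
evaluation of any representative at `κ = λᵢ + rℏ`. -/
def rest {n d : ℕ} (i : Fin (n+1)) (r : ℕ) (hr : r ≤ d) : ClassN n d →+* Fh n :=
  Ideal.Quotient.lift _ (Polynomial.evalRingHom (pt n i r)) (by
    intro a ha
    rw [Ideal.mem_span_singleton] at ha
    obtain ⟨c, rfl⟩ := ha
    simp [eval_genN n d i r hr])

/-- `Ω`-Euler data, where the invertible class `Ω` on `ℙⁿ` is identified with the family
of its restrictions `Ω(λᵢ) ∈ F` (the weights `λᵢ` being pairwise distinct, a class on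
`ℙⁿ` is precisely such a family). -/
def IsEulerData {n : ℕ} (Ω : Fin (n+1) → F n) (Q : (d : ℕ) → ClassN n d) : Prop :=
  (∀ i, rest i 0 le_rfl (Q 0) = C (Ω i)) ∧
  ∀ d r, 0 < r → ∀ hr : r < d, ∀ i : Fin (n+1),
    C (Ω i) * rest i r hr.le (Q d) =
      rest i r le_rfl (Q r) * rest i 0 (Nat.zero_le _) (Q (d - r))

/-- `(0,1,β,Ω)`-Euler data; the classes `β`, `Ω` on `ℙⁿ` are identified with the
families of their restrictions at the fixed points. -/
def Is01EulerData {n : ℕ} (β Ω : Fin (n+1) → F n) (Q : (d : ℕ) → ℕ → ClassN n d) : Prop :=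
  (∀ (k : ℕ) i, rest i 0 le_rfl (Q 0 k) = C (β i ^ k * Ω i)) ∧
  ∀ d, 1 ≤ d → ∀ r, ∀ hr : r ≤ d, ∀ i : Fin (n+1), ∀ k : ℕ,
    C (Ω i) * rest i r hr (Q d k) =
      rest i r le_rfl (Q r 0) * rest i 0 (Nat.zero_le _) (Q (d - r) k)


/-- The field `F(ℏ)` of rational functions in `ℏ`, realized as the fraction field
of `F[ℏ]`. -/
def FH (n : ℕ) : Type := FractionRing (Fh n)

instance (n : ℕ) : Field (FH n) := inferInstanceAs (Field (FractionRing (Fh n)))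

instance (n : ℕ) : Algebra (Fh n) (FH n) :=
  inferInstanceAs (Algebra (Fh n) (FractionRing (Fh n)))

/-- The canonical embedding `F[ℏ] → F(ℏ)`. -/
def toFH {n : ℕ} : Fh n →+* FH n := algebraMap (Fh n) (FH n)

/-- `λᵢ` as an element of `F(ℏ)`. -/
def lamF (n : ℕ) (i : Fin (n+1)) : FH n := toFH (C (lam n i))

/-- `ℏ` as an element of `F(ℏ)`. -/
def hbarF (n : ℕ) : FH n := toFH (X : Fh n)

/-- `Φ_d` evaluated at `p = λᵢ`:  `∏_{l=0}^{n} ∏_{m=1}^{d} (λᵢ − λ_l − mℏ) ∈ F(ℏ)`. -/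
def PhiF (n d : ℕ) (i : Fin (n+1)) : FH n :=
  toFH (∏ l : Fin (n+1), ∏ m ∈ Finset.Icc 1 d, (C (lam n i - lam n l) - (m : Fh n) * X))

/-- `𝓘(Q) ∈ A = F(ℏ)[p]/(∏_l (p−λ_l))` for a class `Q` on `N_d`.  Since the `λ_l`
are pairwise distinct, `A` is identified (by restriction, i.e. by the Chinese
remainder theorem) with the ring of `(n+1)`-tuples in `F(ℏ)`; `𝓘(Q)` is the tuple of
restrictions `Q(λᵢ) ∈ F[ℏ] ⊆ F(ℏ)`. -/
def Iclass {n d : ℕ} (Q : ClassN n d) : Fin (n+1) → FH n :=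
  fun i => toFH (rest i 0 (Nat.zero_le d) Q)

/-- The coefficient of `tᵇ qᵉ` in the `i`-th component of the hypergeometric series
`HG[B] = exp(−pt/ℏ)·(B₀ + Σ_{d≥1} qᵈ·B_d·Φ_d⁻¹) ∈ A[[t,q]]`, an element of
`A[[t,q]]` being identified with the family of coefficient functions
`(i, b, e) ↦ (coefficient of tᵇ qᵉ in the i-th component)`. -/
def HGc {n : ℕ} (B : ℕ → Fin (n+1) → FH n) : Fin (n+1) → ℕ → ℕ → FH n :=
  fun i b e =>
    ((-(lamF n i) / hbarF n) ^ b / (Nat.factorial b : FH n)) * (B e i / PhiF n e i)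

/-- The conjugation `ℏ ↦ −ℏ` on `F[ℏ]`. -/
def conjH {n : ℕ} (f : Fh n) : Fh n := f.comp (-X)

/-- A height-`0` datum is self-conjugate if `Q_{d,0}(λᵢ + dℏ) = conj(Q_{d,0}(λᵢ))`. -/
def SelfConjugate {n : ℕ} (Q : (d : ℕ) → ClassN n d) : Prop :=
  ∀ d : ℕ, 1 ≤ d → ∀ i : Fin (n+1),
    rest i d le_rfl (Q d) = conjH (rest i 0 (Nat.zero_le d) (Q d))

/-- Linking via the height-`0` data: `Q_{d,0}(λᵢ)` and `P_{d,0}(λᵢ)` agree at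
`ℏ = (λᵢ − λⱼ)/d` for all `d ≥ 1` and `i ≠ j`. -/
def Linked0 {n : ℕ} (Q P : (d : ℕ) → ClassN n d) : Prop :=
  ∀ d : ℕ, 1 ≤ d → ∀ i j : Fin (n+1), i ≠ j →
    Polynomial.eval ((lam n i - lam n j) / (d : F n)) (rest i 0 (Nat.zero_le d) (Q d)) =
    Polynomial.eval ((lam n i - lam n j) / (d : F n)) (rest i 0 (Nat.zero_le d) (P d))

/-- The exponential `exp(G) = Σ_j G^j/j!` of a `q`-power series with vanishing
constant term (defined coefficientwise; the sum is finite in each degree). -/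
def expQ {n : ℕ} (G : PowerSeries (FH n)) : PowerSeries (FH n) :=
  PowerSeries.mk fun e => ∑ j ∈ Finset.range (e+1),
    PowerSeries.coeff e (G ^ j) / (Nat.factorial j : FH n)

/-- Multiplication of an element of `A[[t,q]]` (given by its coefficient functions)
by a power series in `q` alone. -/
def mulQ {n : ℕ} (c : PowerSeries (FH n)) (H : Fin (n+1) → ℕ → ℕ → FH n) :
    Fin (n+1) → ℕ → ℕ → FH n :=
  fun i b e => ∑ e1 ∈ Finset.range (e+1), PowerSeries.coeff e1 c * H i b (e - e1)

/-- Tail product `∏_l ∏_{m=e+1}^{d} (κ - λ_l - mℏ)`. -/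
def tailP (n e d : ℕ) : Polynomial (Fh n) :=
  ∏ l : Fin (n+1), ∏ m ∈ Finset.Ioc e d, (X - C (pt n l m))

/-- `∏_l ∏_{m=a+1}^{b} (λᵢ - λ_l - mℏ) ∈ F[ℏ]`. -/
def tEv (n a b : ℕ) (i : Fin (n+1)) : Fh n :=
  ∏ l : Fin (n+1), ∏ m ∈ Finset.Ioc a b, (C (lam n i - lam n l) - (m : Fh n) * X)

/-- `Φ_d(λᵢ)` as a polynomial in `F[ℏ]`. -/
def Pp (n d : ℕ) (i : Fin (n+1)) : Fh n :=
  ∏ l : Fin (n+1), ∏ m ∈ Finset.Icc 1 d, (C (lam n i - lam n l) - (m : Fh n) * X)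

lemma PhiF_eq (n d : ℕ) (i : Fin (n+1)) : PhiF n d i = toFH (Pp n d i) := rfl

lemma rest_mk {n d : ℕ} (i : Fin (n+1)) (r : ℕ) (hr : r ≤ d) (P : Polynomial (Fh n)) :
    rest i r hr (Ideal.Quotient.mk _ P) = P.eval (pt n i r) := rfl

lemma mk_out {n d : ℕ} (Q : ClassN n d) :
    Ideal.Quotient.mk (Ideal.span {genN n d}) (Quotient.out Q) = Q := Quotient.out_eq Q

lemma eval_out {n d : ℕ} (i : Fin (n+1)) (r : ℕ) (hr : r ≤ d) (Q : ClassN n d) :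
    Polynomial.eval (pt n i r) (Quotient.out Q) = rest i r hr Q := by
  conv_rhs => rw [← mk_out Q, rest_mk]

lemma eval_tail_zero {n : ℕ} {e d r : ℕ} (i : Fin (n+1)) (hre : e < r) (hrd : r ≤ d) :
    (tailP n e d).eval (pt n i r) = 0 := by
  rw [tailP, Polynomial.eval_prod]
  refine Finset.prod_eq_zero (Finset.mem_univ i) ?_
  rw [Polynomial.eval_prod]
  refine Finset.prod_eq_zero (Finset.mem_Ioc.mpr ⟨hre, hrd⟩) ?_
  simp

lemma eval_tail {n : ℕ} {e d r : ℕ} (i : Fin (n+1)) (hre : r ≤ e) (hed : e ≤ d) :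
    (tailP n e d).eval (pt n i r) = tEv n (e - r) (d - r) i := by
  rw [tailP, tEv, Polynomial.eval_prod]
  refine Finset.prod_congr rfl fun l _ => ?_
  rw [Polynomial.eval_prod]
  have hmap : (Finset.Ioc (e - r) (d - r)).map (addRightEmbedding r) = Finset.Ioc e d := by
    rw [Finset.map_add_right_Ioc]
    congr 1 <;> omega
  rw [← hmap, Finset.prod_map]
  refine Finset.prod_congr rfl fun m hm => ?_
  simp only [addRightEmbedding_apply, Polynomial.eval_sub, Polynomial.eval_X,
    Polynomial.eval_C, pt, Nat.cast_add, Polynomial.C_sub]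
  ring

lemma Pp_mul_tEv {n : ℕ} (e d : ℕ) (i : Fin (n+1)) (h : e ≤ d) :
    Pp n e i * tEv n e d i = Pp n d i := by
  rw [Pp, Pp, tEv, ← Finset.prod_mul_distrib]
  refine Finset.prod_congr rfl fun l _ => ?_
  rw [show Finset.Icc 1 e = Finset.Ico 1 (e+1) by ext x; simp <;> omega,
      show Finset.Ioc e d = Finset.Ico (e+1) (d+1) by ext x; simp <;> omega,
      Finset.prod_Ico_consecutive _ (by omega) (by omega),
      show Finset.Ico 1 (d+1) = Finset.Icc 1 d by ext x; simp <;> omega]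

instance (n : ℕ) : IsFractionRing (MvPolynomial (Fin (n+1)) ℂ) (F n) :=
  inferInstanceAs (IsFractionRing (MvPolynomial (Fin (n+1)) ℂ)
    (FractionRing (MvPolynomial (Fin (n+1)) ℂ)))

instance (n : ℕ) : CharZero (F n) :=
  charZero_of_injective_algebraMap
    (IsFractionRing.injective (MvPolynomial (Fin (n+1)) ℂ) (F n))

lemma Pp_ne_zero {n d : ℕ} {i : Fin (n+1)} : Pp n d i ≠ 0 := by
  rw [Pp]
  refine Finset.prod_ne_zero_iff.mpr fun l _ => Finset.prod_ne_zero_iff.mpr fun m hm => ?_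
  intro h
  have := congrArg (Polynomial.coeff · 1) h
  simp at this
  have hm1 := (Finset.mem_Icc.mp hm).1
  omega

instance (n : ℕ) : IsFractionRing (Fh n) (FH n) :=
  inferInstanceAs (IsFractionRing (Fh n) (FractionRing (Fh n)))

/-- **Mirror transformation of height `k₀`, additive form** (Lemma 4.4 of the
paper): given self-conjugate `(0,1,p,Ω)`-Euler data `Q`, heights `k₀ ≥ 1` and
`k★`, and `f ∈ q·F[[q]]`, there is a `(0,1,p,Ω)`-Euler data `Q̃` linked to `Q`,
agreeing with `Q` at all heights `k ≠ k₀`, with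
`HG[𝓘(Q̃_{k₀})] = HG[𝓘(Q_{k₀})] + f·HG[𝓘(Q_{k★})]`. -/
theorem mirror_transformation_add (n : ℕ) (hn : 1 ≤ n)
    (Ω : Fin (n+1) → F n) (hΩ : ∀ i, Ω i ≠ 0)
    (Q : (d : ℕ) → ℕ → ClassN n d)
    (hQ : Is01EulerData (lam n) Ω Q)
    (hconj : SelfConjugate (fun d => Q d 0))
    (k0 : ℕ) (hk0 : 1 ≤ k0) (kstar : ℕ)
    (f : ℕ → F n) (hf : f 0 = 0) :
    ∃ Q' : (d : ℕ) → ℕ → ClassN n d,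
      Is01EulerData (lam n) Ω Q' ∧
      Linked0 (fun d => Q d 0) (fun d => Q' d 0) ∧
      (∀ (d k : ℕ), k ≠ k0 → Q' d k = Q d k) ∧
      (∀ (i : Fin (n+1)) (b e : ℕ),
        HGc (fun d => Iclass (Q' d k0)) i b e =
          HGc (fun d => Iclass (Q d k0)) i b e +
            mulQ (PowerSeries.mk fun e' => toFH (C (f e')))
              (HGc (fun d => Iclass (Q d kstar))) i b e) := by
  classical
  -- the correction class on `N_d`
  set corr : (d : ℕ) → ClassN n d := fun d => ∑ s ∈ Finset.Icc 1 d,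
    Ideal.Quotient.mk _ (C (C (f s)) * Quotient.out (Q (d - s) kstar) * tailP n (d - s) d)
    with hcorr
  have rest_corr : ∀ d r (hr : r ≤ d) (i : Fin (n+1)), rest i r hr (corr d) =
      ∑ s ∈ Finset.Icc 1 d, C (f s) *
        Polynomial.eval (pt n i r) (Quotient.out (Q (d - s) kstar)) *
        Polynomial.eval (pt n i r) (tailP n (d - s) d) := by
    intro d r hr i
    rw [hcorr, map_sum]
    refine Finset.sum_congr rfl fun s hs => ?_
    rw [rest_mk]
    simp [Polynomial.eval_mul]
  have euler0 : ∀ d r (hr : r ≤ d) (i : Fin (n+1)) (k : ℕ),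
      C (Ω i) * rest i r hr (Q d k) =
        rest i r le_rfl (Q r 0) * rest i 0 (Nat.zero_le _) (Q (d - r) k) := by
    intro d r hr i k
    rcases Nat.eq_zero_or_pos d with hdz | hdz
    · subst hdz
      have hr0 : r = 0 := Nat.le_zero.mp hr
      subst hr0
      rw [hQ.1 0 i]
      simp
    · exact hQ.2 d hdz r hr i k
  have key : ∀ d r (hr : r ≤ d) (i : Fin (n+1)),
      C (Ω i) * rest i r hr (corr d) =
        rest i r le_rfl (Q r 0) * rest i 0 (Nat.zero_le _) (corr (d - r)) := by
    intro d r hr i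
    rw [rest_corr d r hr i, rest_corr (d - r) 0 (Nat.zero_le _) i,
      Finset.mul_sum, Finset.mul_sum]
    rw [← Finset.sum_subset
      (Finset.Icc_subset_Icc_right (Nat.sub_le d r) : Finset.Icc 1 (d-r) ⊆ Finset.Icc 1 d)
      (fun s hs hs' => by
        have h1 := Finset.mem_Icc.mp hs
        have h2 : ¬ (1 ≤ s ∧ s ≤ d - r) := fun h => hs' (Finset.mem_Icc.mpr h)
        rw [eval_tail_zero i (by omega) hr]
        ring)]
    refine Finset.sum_congr rfl fun s hs => ?_
    have hs' := Finset.mem_Icc.mp hs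
    have h1 : r ≤ d - s := by omega
    rw [eval_out i r h1 (Q (d - s) kstar), eval_out i 0 (Nat.zero_le _) (Q (d - r - s) kstar),
      eval_tail i h1 (by omega : d - s ≤ d),
      eval_tail i (Nat.zero_le _) (Nat.sub_le (d - r) s)]
    have he := euler0 (d - s) r h1 i kstar
    rw [show d - s - r = d - r - s from by omega] at he ⊢
    rw [Nat.sub_zero, Nat.sub_zero]
    linear_combination (C (f s) * tEv n (d - r - s) (d - r) i) * he
  refine ⟨fun d k => if k = k0 then Q d k0 + corr d else Q d k, ?_, ?_, ?_, ?_⟩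
  · -- Is01EulerData for the modified data
    constructor
    · intro k i
      by_cases hk : k = k0
      · subst hk
        have hc0 : corr 0 = 0 := by
          rw [hcorr]
          simp
        simp only [if_pos rfl, hc0, add_zero]
        exact hQ.1 k i
      · simp only [if_neg hk]
        exact hQ.1 k i
    · intro d hd r hr i k
      simp only [if_neg (show ¬((0:ℕ) = k0) by omega)]
      by_cases hk : k = k0
      · simp only [if_pos hk, hk, if_true]
        rw [map_add, map_add, mul_add, mul_add]
        rw [euler0 d r hr i k0, key d r hr i]
      · simp only [if_neg hk]
        exact hQ.2 d hd r hr i k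
  · -- Linked0
    intro d hd i j hij
    simp only [if_neg (by omega : ¬ (0 = k0))]
  · exact fun d k h => if_neg h
  · -- HG identity
    intro i b e
    have hQ'e : (if k0 = k0 then Q e k0 + corr e else Q e k0) = Q e k0 + corr e := if_pos rfl
    simp only [HGc, mulQ, PowerSeries.coeff_mk, eq_self_iff_true, if_true]
    set c : FH n := (-(lamF n i) / hbarF n) ^ b / (Nat.factorial b : FH n) with hc
    have hIc : Iclass (Q e k0 + corr e) i =
        Iclass (Q e k0) i + toFH (rest i 0 (Nat.zero_le e) (corr e)) := by
      simp [Iclass, map_add]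
    rw [hIc, add_div, mul_add]
    congr 1
    rw [rest_corr e 0 (Nat.zero_le e) i, map_sum, Finset.sum_div, Finset.mul_sum]
    rw [← Finset.sum_subset
      (show Finset.Icc 1 e ⊆ Finset.range (e+1) from fun x hx => by
        simp only [Finset.mem_Icc] at hx; exact Finset.mem_range.mpr (by omega))
      (fun x hx hx' => by
        have : x = 0 := by
          simp only [Finset.mem_range] at hx
          simp only [Finset.mem_Icc, not_and, not_le] at hx'
          omega
        subst this
        rw [hf]
        simp)]
    refine Finset.sum_congr rfl fun s hs => ?_
    have hs' := Finset.mem_Icc.mp hs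
    have hes : e - s ≤ e := Nat.sub_le e s
    have hmul := Pp_mul_tEv (e - s) e i hes
    have hprod : Pp n (e - s) i * tEv n (e - s) e i ≠ 0 := by
      rw [hmul]; exact Pp_ne_zero
    have hP : toFH (Pp n (e - s) i) ≠ 0 := fun h =>
      (mul_ne_zero_iff.mp hprod).1 ((map_eq_zero_iff toFH (IsFractionRing.injective _ _)).mp h)
    have hT : toFH (tEv n (e - s) e i) ≠ 0 := fun h =>
      (mul_ne_zero_iff.mp hprod).2 ((map_eq_zero_iff toFH (IsFractionRing.injective _ _)).mp h)
    rw [eval_out i 0 (Nat.zero_le _) (Q (e - s) kstar),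
      eval_tail i (Nat.zero_le _) hes, Nat.sub_zero,
      PhiF_eq n e i, ← hmul, PhiF_eq n (e - s) i]
    show c * (toFH (C (f s) * rest i 0 (Nat.zero_le (e-s)) (Q (e - s) kstar) * tEv n (e-s) e i) /
        toFH (Pp n (e-s) i * tEv n (e-s) e i)) =
      toFH (C (f s)) * (c * (Iclass (Q (e - s) kstar) i / toFH (Pp n (e-s) i)))
    rw [map_mul, map_mul, map_mul]
    rw [Iclass]
    field_simp
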